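/- With d as above (entries over ℝ or ℂ), the exponential exp(d) = Σ_{m≥0} d^m/m! is the upper triangular matrix with diagonal entries e^α, e^{2α}, …, e^{2^{n-1}α}, last-column entries β' = β·(e^{2^{n-1}α} - e^α)/((2^{n-1}-1)α) (interpreted as β when α = 0) in the first row, (e^{2^{i-1}α} - e^{2^{n-1}α}) a_{i,n} in row i for 2 ≤ i ≤ n-2, and zeros elsewhere. -/

import Mathlib

open Matrix

section aux

variable {m : Type*} [Fintype m] [DecidableEq m]

lemma aux_diag_mul_vmv (v w u : m → ℝ) :
    diagonal v * vecMulVec w u = vecMulVec (fun i => v i * w i) u := by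
  ext i j
  simp [Matrix.diagonal_mul, vecMulVec_apply, mul_assoc]

lemma aux_vmv_mul_diag (v w u : m → ℝ) :
    vecMulVec w u * diagonal v = vecMulVec w (fun j => u j * v j) := by
  ext i j
  simp [Matrix.mul_diagonal, vecMulVec_apply, mul_assoc]

lemma aux_vmv_mul_vmv (w u w' u' : m → ℝ) :
    vecMulVec w u * vecMulVec w' u' = (u ⬝ᵥ w') • vecMulVec w u' := by
  ext i j
  simp only [Matrix.mul_apply, vecMulVec_apply, Matrix.smul_apply, dotProduct,
    smul_eq_mul, Finset.sum_mul]
  exact Finset.sum_congr rfl fun k _ => by ring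

/-- conjugating a diagonal matrix by `1 + w uᵀ` where `u = e_l` and `w l = 0`. -/
lemma aux_conj_diag (l : m) (w v : m → ℝ) (hw : w l = 0) :
    (1 + vecMulVec w (fun j => if j = l then 1 else 0)) * diagonal v *
      (1 - vecMulVec w (fun j => if j = l then 1 else 0)) =
    diagonal v + vecMulVec (fun i => (v l - v i) * w i) (fun j => if j = l then 1 else 0) := by
  set u : m → ℝ := fun j => if j = l then 1 else 0 with hu
  have hWD : vecMulVec w u * diagonal v = (v l) • vecMulVec w u := by
    rw [aux_vmv_mul_diag]
    ext i j
    simp only [vecMulVec_apply, Matrix.smul_apply, smul_eq_mul, hu]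
    by_cases h : j = l <;> simp [h] <;> ring
  have hWW : vecMulVec w u * vecMulVec w u = 0 := by
    rw [aux_vmv_mul_vmv]
    have : u ⬝ᵥ w = 0 := by simp [hu, dotProduct, hw]
    rw [this, zero_smul]
  have hDW : diagonal v * vecMulVec w u = vecMulVec (fun i => v i * w i) u :=
    aux_diag_mul_vmv v w u
  have expand : (1 + vecMulVec w u) * diagonal v * (1 - vecMulVec w u) =
      diagonal v + vecMulVec w u * diagonal v - diagonal v * vecMulVec w u
        - vecMulVec w u * diagonal v * vecMulVec w u := by noncomm_ring
  rw [expand, hWD, hDW, smul_mul_assoc, hWW, smul_zero, sub_zero]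
  ext i j
  simp only [Matrix.add_apply, Matrix.sub_apply, Matrix.smul_apply, vecMulVec_apply,
    smul_eq_mul]
  ring

end aux

lemma aux_exp_sq_zero {𝔸 : Type*} [NormedRing 𝔸] [NormedAlgebra ℝ 𝔸] [CompleteSpace 𝔸]
    (x : 𝔸) (h : x * x = 0) : NormedSpace.exp x = 1 + x := by
  rw [NormedSpace.exp_eq_tsum ℝ]
  simp only []
  show (∑' k : ℕ, ((Nat.factorial k : ℝ))⁻¹ • x ^ k) = 1 + x
  have hpow : ∀ k, x ^ (k + 2) = 0 := by
    intro k
    rw [pow_add, pow_two, h, mul_zero]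
  rw [tsum_eq_sum (s := Finset.range 2) (by
    intro b hb
    simp only [Finset.mem_range, not_lt] at hb
    obtain ⟨k, rfl⟩ := Nat.exists_eq_add_of_le hb
    rw [add_comm, hpow, smul_zero])]
  simp [Finset.sum_range_succ]

lemma aux_matrix_exp_sq_zero {m : Type*} [Fintype m] [DecidableEq m]
    (A : Matrix m m ℝ) (h : A * A = 0) : NormedSpace.exp A = 1 + A := by
  letI : SeminormedRing (Matrix m m ℝ) := Matrix.linftyOpSemiNormedRing
  letI : NormedRing (Matrix m m ℝ) := Matrix.linftyOpNormedRing
  letI : NormedAlgebra ℝ (Matrix m m ℝ) := Matrix.linftyOpNormedAlgebra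
  exact aux_exp_sq_zero A h

/-- the matrix exponential of the triangular derivation matrix `d`
(over ℝ, dimension `n+1`, 0-based indices: diagonal `2^i α`, last column
`β, (2^i - 2^n)α a_i, 2^n α`) is upper triangular with diagonal `e^{2^i α}`,
`(1,n)` entry `β(e^{2^n α} - e^α)/((2^n - 1)α)` (read as `β` when `α = 0`),
`(i,n)` entries `(e^{2^i α} - e^{2^n α}) a_i`, and zeros elsewhere. -/
theorem derivation_matrix_exp {n : ℕ} (hn : 2 ≤ n)
    (α β : ℝ) (a : Fin (n+1) → ℝ)
    (d : Matrix (Fin (n+1)) (Fin (n+1)) ℝ)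
    (hd : d = Matrix.of fun i j : Fin (n+1) =>
      if i = j then (2 : ℝ) ^ (i : ℕ) * α
      else if j = Fin.last n then
        (if i = 0 then β else ((2 : ℝ) ^ (i : ℕ) - 2 ^ n) * α * a i)
      else 0) :
    NormedSpace.exp d = Matrix.of fun i j : Fin (n+1) =>
      if i = j then Real.exp ((2 : ℝ) ^ (i : ℕ) * α)
      else if j = Fin.last n then
        (if i = 0 then
          (if α = 0 then β
           else β * (Real.exp ((2 : ℝ) ^ n * α) - Real.exp α) / (((2 : ℝ) ^ n - 1) * α))
         else (Real.exp ((2 : ℝ) ^ (i : ℕ) * α) - Real.exp ((2 : ℝ) ^ n * α)) * a i)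
      else 0 := by
  have h0l : (0 : Fin (n+1)) ≠ Fin.last n := by
    simp only [ne_eq, Fin.ext_iff, Fin.val_zero, Fin.val_last]
    omega
  by_cases hα : α = 0
  · -- α = 0 : d is square-zero
    subst hα
    have hdd : d * d = 0 := by
      ext i j
      simp only [Matrix.mul_apply, hd, Matrix.of_apply, Matrix.zero_apply, mul_zero, zero_mul]
      apply Finset.sum_eq_zero
      intro k _
      by_cases hik : i = k
      · subst hik; simp
      · by_cases hkl : k = Fin.last n
        · subst hkl
          by_cases hjl : Fin.last n = j
          · simp [hjl.symm ▸ (by simp [hjl] : ¬ (i = j) → True), hik]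
            by_cases hij : i = j <;> simp [hij, ← hjl]
          · simp [hjl, hik]
            intros; simp_all
        · simp [hik, hkl]
      
    rw [aux_matrix_exp_sq_zero d hdd]
    ext i j
    by_cases hij : i = j
    · subst hij; simp [hd]
    · by_cases hjl : j = Fin.last n
      · subst hjl
        have hn0 : n ≠ 0 := by omega
        by_cases hi0 : i = 0 <;> simp [hd, hij, hi0, Matrix.one_apply, hn0, h0l]
      · simp [hd, hij, hjl]
  · -- α ≠ 0 : diagonalize
    have h2n1 : ((2:ℝ)^n - 1) ≠ 0 := by
      have : (1:ℝ) < 2^n := one_lt_pow₀ (by norm_num) (by omega)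
      linarith
    set u : Fin (n+1) → ℝ := fun j => if j = Fin.last n then 1 else 0 with hu
    set w : Fin (n+1) → ℝ := fun i =>
      if i = Fin.last n then 0 else if i = 0 then β / (((2:ℝ)^n - 1) * α) else -a i with hw
    have hwl : w (Fin.last n) = 0 := by simp [hw]
    set W : Matrix (Fin (n+1)) (Fin (n+1)) ℝ := vecMulVec w u with hW
    have hWW : W * W = 0 := by
      rw [hW, aux_vmv_mul_vmv]
      have : u ⬝ᵥ w = 0 := by simp [hu, dotProduct, hwl]
      rw [this, zero_smul]
    have hunit1 : (1 + W) * (1 - W) = 1 := by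
      have : (1 + W) * (1 - W) = 1 - W * W := by noncomm_ring
      rw [this, hWW, sub_zero]
    have hunit2 : (1 - W) * (1 + W) = 1 := by
      have : (1 - W) * (1 + W) = 1 - W * W := by noncomm_ring
      rw [this, hWW, sub_zero]
    set U : (Matrix (Fin (n+1)) (Fin (n+1)) ℝ)ˣ := ⟨1 + W, 1 - W, hunit1, hunit2⟩ with hU
    set v : Fin (n+1) → ℝ := fun i => (2:ℝ) ^ (i:ℕ) * α with hv
    have hvl : v (Fin.last n) = (2:ℝ)^n * α := by
      rw [hv]
      norm_num
    have hrep : d = (1 + W) * diagonal v * (1 - W) := by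
      rw [hW, aux_conj_diag (Fin.last n) w v hwl]
      ext i j
      simp only [hd, Matrix.of_apply, Matrix.add_apply, Matrix.diagonal_apply,
        vecMulVec_apply]
      by_cases hij : i = j
      · subst hij
        by_cases hil : i = Fin.last n
        · subst hil; simp [hwl, hvl]
        · simp [hil, hv]
      · by_cases hjl : j = Fin.last n
        · subst hjl
          have hil : i ≠ Fin.last n := hij
          by_cases hi0 : i = 0
          · subst hi0
            simp only [if_neg hij, if_pos rfl, hvl, hv, hw, if_neg h0l, Fin.val_zero,
              pow_zero, one_mul, eq_self_iff_true, if_true, Fin.val_last]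
            field_simp
            ring
          · simp only [if_neg hij, if_pos rfl, hvl, hv, hw, if_neg hil, if_neg hi0, if_pos rfl, eq_self_iff_true, if_true, Fin.val_last]
            ring
        · simp [hij, hjl]
    have hexp : NormedSpace.exp d = (1 + W) * NormedSpace.exp (diagonal v) * (1 - W) := by
      rw [hrep]
      exact Matrix.exp_units_conj U (diagonal v)
    rw [hexp, Matrix.exp_diagonal, Pi.exp_def]
    have hexpv : (fun i => NormedSpace.exp (v i)) = fun i => Real.exp (v i) := by
      funext i; rw [Real.exp_eq_exp_ℝ]
    rw [hexpv, hW, aux_conj_diag (Fin.last n) w _ hwl]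
    ext i j
    simp only [Matrix.of_apply, Matrix.add_apply, Matrix.diagonal_apply, vecMulVec_apply]
    by_cases hij : i = j
    · subst hij
      by_cases hil : i = Fin.last n
      · subst hil; simp [hwl, hvl]
      · simp [hil, hv]
    · by_cases hjl : j = Fin.last n
      · subst hjl
        have hil : i ≠ Fin.last n := hij
        by_cases hi0 : i = 0
        · subst hi0
          simp only [if_neg hij, if_pos rfl, hvl, hv, hw, if_neg h0l, Fin.val_zero,
            pow_zero, one_mul, if_neg hα, eq_self_iff_true, if_true, Fin.val_last]
          field_simp
          ring
        · simp only [if_neg hij, if_pos rfl, hvl, hv, hw, if_neg hil, if_neg hi0, if_pos rfl, eq_self_iff_true, if_true, Fin.val_last]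
          ring
      · simp [hij, hjl]
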